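/- Let A ∈ 𝓑 and suppose there exist a measurable function V : S → [0,∞) and constants c > 0 and k such that ∫_S V(y) P(x,dy) ≤ V(x) − c for all x ∉ A and ∫_S V(y) P(x,dy) ≤ k for all x ∈ A. Then sup_{x ∈ A} 𝔼^x(T_A) ≤ 1 + k/c. -/

import Mathlib

open MeasureTheory ProbabilityTheory
open scoped ENNReal NNReal

noncomputable section

/-- The hitting time `T_A = inf {n ≥ 1 : ω n ∈ A}`, with value `⊤ : ℕ∞` if no such `n` exists. -/
def hitTime {S : Type*} (A : Set S) (ω : ℕ → S) : ℕ∞ :=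
  sInf ((fun k : ℕ => (k : ℕ∞)) '' {k : ℕ | 1 ≤ k ∧ ω k ∈ A})

/-- `IsMarkovPath K μ₀ L` says that `L` is the law on path space `ℕ → E` of the
time-homogeneous Markov chain with transition kernel `K` and initial distribution `μ₀`
(the measure produced by the Ionescu–Tulcea construction), characterized through its
finite-dimensional distributions. -/
def IsMarkovPath {E : Type*} [MeasurableSpace E] (K : Kernel E E) (μ₀ : Measure E)
    (L : Measure (ℕ → E)) : Prop :=
  IsProbabilityMeasure L ∧
    L.map (fun ω => ω 0) = μ₀ ∧
    ∀ n : ℕ,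
      L.map (fun ω => fun i : Fin (n + 2) => ω (i : ℕ)) =
        (L.map (fun ω => fun i : Fin (n + 1) => ω (i : ℕ))).bind
          (fun v => (K (v (Fin.last n))).map (Fin.snoc v))

namespace TweedieAux

set_option linter.unusedSectionVars false

variable {S : Type*} [MeasurableSpace S]

/-- Paths of length `n+1` whose coordinates `1,…,n` avoid `A`. -/
def Dset (A : Set S) (n : ℕ) : Set (Fin (n+1) → S) :=
  {v | ∀ i : Fin (n+1), 1 ≤ (i:ℕ) → v i ∉ A}

/-- Paths of length `n+2` whose coordinates `1,…,n` avoid `A`. -/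
def Eset (A : Set S) (n : ℕ) : Set (Fin (n+2) → S) :=
  {w | ∀ i : Fin (n+2), 1 ≤ (i:ℕ) → (i:ℕ) ≤ n → w i ∉ A}

lemma measurableSet_Dset {A : Set S} (hA : MeasurableSet A) (n : ℕ) :
    MeasurableSet (Dset A n) := by
  have : Dset A n = ⋂ i : Fin (n+1), {v : Fin (n+1) → S | 1 ≤ (i:ℕ) → v i ∉ A} := by
    ext v; simp [Dset, Set.mem_iInter]
  rw [this]
  refine MeasurableSet.iInter fun i => ?_
  by_cases h : 1 ≤ (i:ℕ)
  · have : {v : Fin (n+1) → S | 1 ≤ (i:ℕ) → v i ∉ A} = (fun v => v i) ⁻¹' Aᶜ := by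
      ext v; simp [h]
    rw [this]; exact (measurable_pi_apply i) hA.compl
  · have : {v : Fin (n+1) → S | 1 ≤ (i:ℕ) → v i ∉ A} = Set.univ := by
      ext v; simp [h]
    simp [this]

lemma measurableSet_Eset {A : Set S} (hA : MeasurableSet A) (n : ℕ) :
    MeasurableSet (Eset A n) := by
  have : Eset A n = ⋂ i : Fin (n+2), {w : Fin (n+2) → S | 1 ≤ (i:ℕ) → (i:ℕ) ≤ n → w i ∉ A} := by
    ext w; simp [Eset, Set.mem_iInter]
  rw [this]
  refine MeasurableSet.iInter fun i => ?_
  by_cases h : 1 ≤ (i:ℕ) ∧ (i:ℕ) ≤ n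
  · have : {w : Fin (n+2) → S | 1 ≤ (i:ℕ) → (i:ℕ) ≤ n → w i ∉ A} = (fun w => w i) ⁻¹' Aᶜ := by
      ext w; simp [h.1, h.2]
    rw [this]; exact (measurable_pi_apply i) hA.compl
  · have : {w : Fin (n+2) → S | 1 ≤ (i:ℕ) → (i:ℕ) ≤ n → w i ∉ A} = Set.univ := by
      ext w; simp; intro h1 h2; exact absurd ⟨h1, h2⟩ h
    simp [this]

lemma snoc_mem_Eset {A : Set S} {n : ℕ} (v : Fin (n+1) → S) (y : S) :
    (Fin.snoc v y : Fin (n+2) → S) ∈ Eset A n ↔ v ∈ Dset A n := by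
  constructor
  · intro h j hj
    have := h (Fin.castSucc j) (by simpa using hj) (by simpa using Fin.is_le j)
    simpa [Fin.snoc_castSucc] using this
  · intro h i
    induction i using Fin.lastCases with
    | last => intro _ hle; simp [Fin.val_last] at hle
    | cast j =>
      intro h1 _
      simpa [Fin.snoc_castSucc] using h j (by simpa using h1)

lemma Dset_subset_Eset {A : Set S} (n : ℕ) : Dset A (n+1) ⊆ Eset A n :=
  fun w hw i h1 _ => hw i h1

lemma last_not_mem {A : Set S} {n : ℕ} {v : Fin (n+2) → S} (hv : v ∈ Dset A (n+1)) :
    v (Fin.last (n+1)) ∉ A :=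
  hv (Fin.last (n+1)) (by simp [Fin.val_last])

lemma measurable_snocPair (n : ℕ) :
    Measurable (fun p : (Fin (n+1) → S) × S => (Fin.snoc p.1 p.2 : Fin (n+2) → S)) := by
  apply measurable_pi_lambda
  intro i
  induction i using Fin.lastCases with
  | last => simpa using measurable_snd
  | cast i => simpa using (show Measurable fun c : (Fin (n+1) → S) × S => c.1 i from (measurable_pi_apply i).comp measurable_fst)

lemma measurable_snoc' (n : ℕ) (v : Fin (n+1) → S) :
    Measurable (fun y : S => (Fin.snoc v y : Fin (n+2) → S)) := by
  apply measurable_pi_lambda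
  intro i
  induction i using Fin.lastCases with
  | last => simp only [Fin.snoc_last]; exact measurable_id
  | cast i => simp [Fin.snoc_castSucc]

lemma measurable_kappa (P : Kernel S S) [IsMarkovKernel P] (n : ℕ) :
    Measurable (fun v : Fin (n+1) → S =>
      ((P (v (Fin.last n))).map (Fin.snoc v) : Measure (Fin (n+2) → S))) := by
  apply Measure.measurable_of_measurable_coe
  intro s hs
  simp_rw [Measure.map_apply (measurable_snoc' n _) hs]
  have ht : MeasurableSet
      ((fun p : (Fin (n+1) → S) × S => (Fin.snoc p.1 p.2 : Fin (n+2) → S)) ⁻¹' s) :=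
    (measurable_snocPair n) hs
  have := Kernel.measurable_kernel_prodMk_left
    (κ := P.comap (fun v : Fin (n+1) → S => v (Fin.last n)) (measurable_pi_apply _)) ht
  simp only [Kernel.comap_apply] at this
  exact this

lemma hitTime_gt_iff (A : Set S) (ω : ℕ → S) (n : ℕ) :
    (n:ℕ∞) < hitTime A ω ↔ ∀ m : ℕ, 1 ≤ m → m ≤ n → ω m ∉ A := by
  constructor
  · intro h m h1 hm hA'
    have hle : hitTime A ω ≤ (m:ℕ∞) := sInf_le ⟨m, ⟨h1, hA'⟩, rfl⟩
    have hlt : (n:ℕ∞) < (m:ℕ∞) := lt_of_lt_of_le h hle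
    have : n < m := by exact_mod_cast hlt
    omega
  · intro h
    have hge : ((n+1:ℕ):ℕ∞) ≤ hitTime A ω := by
      apply le_sInf
      rintro b ⟨m, ⟨h1, hmA⟩, rfl⟩
      have : n < m := by
        by_contra hcon
        push_neg at hcon
        exact h m h1 hcon hmA
      show ((n+1:ℕ):ℕ∞) ≤ (m:ℕ∞)
      exact_mod_cast this
    exact lt_of_lt_of_le (by exact_mod_cast Nat.lt_succ_self n) hge

lemma enat_coe_eq_tsum (t : ℕ∞) :
    (t : ℝ≥0∞) = ∑' n : ℕ, (if (n:ℕ∞) < t then (1:ℝ≥0∞) else 0) := by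
  induction t using ENat.recTopCoe with
  | top => simp [ENNReal.tsum_const_eq_top_of_ne_zero]
  | coe m =>
    rw [tsum_eq_sum (s := Finset.range m) (by intro n hn; simp at hn; simp [hn, Nat.cast_le])]
    rw [Finset.sum_congr rfl (g := fun _ => (1:ℝ≥0∞))
      (by intro n hn; simp [Nat.cast_lt, Finset.mem_range.mp hn])]
    simp

/-- Main estimate: expected hitting time bound for a chain started at `x ∈ A`. -/
lemma key (P : Kernel S S) [IsMarkovKernel P]
    {A : Set S} (hA : MeasurableSet A)
    {V : S → ℝ≥0∞} (hVmeas : Measurable V)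
    {c k : ℝ≥0} (hc : 0 < c)
    (hdrift : ∀ x ∉ A, (∫⁻ y, V y ∂(P x)) + (c : ℝ≥0∞) ≤ V x)
    (hbound : ∀ x ∈ A, ∫⁻ y, V y ∂(P x) ≤ (k : ℝ≥0∞))
    {x : S} (hx : x ∈ A) {L : Measure (ℕ → S)}
    (hL : IsMarkovPath P (Measure.dirac x) L) :
    ∫⁻ ω, (hitTime A ω : ℝ≥0∞) ∂L ≤ 1 + (k : ℝ≥0∞) / (c : ℝ≥0∞) := by
  classical
  haveI : IsProbabilityMeasure L := hL.1
  -- finite dimensional distributions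
  set mp : ∀ n : ℕ, (ℕ → S) → (Fin (n+1) → S) := fun n ω i => ω (i:ℕ) with hmp_def
  have hmp : ∀ n, Measurable (mp n) :=
    fun n => measurable_pi_lambda _ fun i => measurable_pi_apply _
  set ν : ∀ n : ℕ, Measure (Fin (n+1) → S) := fun n => L.map (mp n) with hν_def
  have hrec : ∀ n : ℕ,
      ν (n+1) = (ν n).bind (fun v => (P (v (Fin.last n))).map (Fin.snoc v)) :=
    fun n => hL.2.2 n
  -- the "one-step expected V" function
  set PV : ∀ n : ℕ, (Fin (n+1) → S) → ℝ≥0∞ :=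
    fun n v => ∫⁻ y, V y ∂(P (v (Fin.last n))) with hPV_def
  have hPV : ∀ n, Measurable (PV n) := fun n =>
    (Measure.measurable_lintegral hVmeas).comp (P.measurable.comp (measurable_pi_apply _))
  have hVlast : ∀ n : ℕ, Measurable fun w : Fin (n+2) → S => V (w (Fin.last (n+1))) :=
    fun n => hVmeas.comp (measurable_pi_apply _)
  set r : ℕ → ℝ≥0∞ :=
    fun n => ∫⁻ w in Eset A n, V (w (Fin.last (n+1))) ∂(ν (n+1)) with hr_def
  -- reduced form of r
  have hrb : ∀ n : ℕ, r n = ∫⁻ v in Dset A n, PV n v ∂(ν n) := by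
    intro n
    have hf : Measurable ((Eset A n).indicator fun w : Fin (n+2) → S =>
        V (w (Fin.last (n+1)))) := (hVlast n).indicator (measurableSet_Eset hA n)
    have hinner : ∀ v : Fin (n+1) → S,
        (∫⁻ w, (Eset A n).indicator (fun w => V (w (Fin.last (n+1)))) w
          ∂((P (v (Fin.last n))).map (Fin.snoc v)))
        = (Dset A n).indicator (PV n) v := by
      intro v
      rw [lintegral_map hf (measurable_snoc' n v)]
      have hpt : ∀ y : S,
          (Eset A n).indicator (fun w => V (w (Fin.last (n+1)))) (Fin.snoc v y)
          = if v ∈ Dset A n then V y else 0 := by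
        intro y
        rw [Set.indicator_apply]
        by_cases h : v ∈ Dset A n
        · rw [if_pos ((snoc_mem_Eset v y).mpr h), if_pos h, Fin.snoc_last]
        · rw [if_neg (fun hmem => h ((snoc_mem_Eset v y).mp hmem)), if_neg h]
      rw [lintegral_congr hpt]
      by_cases h : v ∈ Dset A n
      · simp [h, Set.indicator_of_mem h]; rfl
      · simp [h, Set.indicator_of_notMem h]
    calc r n
        = ∫⁻ w, (Eset A n).indicator (fun w => V (w (Fin.last (n+1)))) w ∂(ν (n+1)) :=
          (lintegral_indicator (measurableSet_Eset hA n) _).symm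
      _ = ∫⁻ v, (∫⁻ w, (Eset A n).indicator (fun w => V (w (Fin.last (n+1)))) w
            ∂((P (v (Fin.last n))).map (Fin.snoc v))) ∂(ν n) := by
          rw [hrec n]
          exact Measure.lintegral_bind (measurable_kappa P n).aemeasurable hf.aemeasurable
      _ = ∫⁻ v, (Dset A n).indicator (PV n) v ∂(ν n) := lintegral_congr hinner
      _ = ∫⁻ v in Dset A n, PV n v ∂(ν n) := lintegral_indicator (measurableSet_Dset hA n) _
  -- initial distribution
  have hν0 : ν 0 = Measure.dirac (fun _ : Fin 1 => x) := by
    have hg : Measurable (fun s : S => fun _ : Fin 1 => s) :=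
      measurable_pi_lambda _ fun _ => measurable_id
    have h0 : mp 0 = (fun s : S => fun _ : Fin 1 => s) ∘ (fun ω : ℕ → S => ω 0) := by
      funext ω
      funext i
      have hi : (i:ℕ) = 0 := Nat.lt_one_iff.mp i.isLt
      simp [hmp_def, hi, Function.comp]
    rw [hν_def]
    simp only
    rw [h0, ← Measure.map_map hg (measurable_pi_apply 0), hL.2.1, Measure.map_dirac' hg]
  have hr0 : r 0 ≤ (k : ℝ≥0∞) := by
    rw [hrb 0]
    have hD0 : Dset A 0 = Set.univ := by
      ext v
      simp only [Dset, Set.mem_setOf_eq, Set.mem_univ, iff_true]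
      intro i hi
      have := Nat.lt_one_iff.mp i.isLt
      omega
    rw [hD0, Measure.restrict_univ, hν0, lintegral_dirac' _ (hPV 0)]
    exact hbound x hx
  -- one-step drift inequality
  have hstep : ∀ n : ℕ,
      r (n+1) + (c:ℝ≥0∞) * ν (n+1) (Dset A (n+1)) ≤ r n := by
    intro n
    rw [hrb (n+1)]
    have h1 : (c:ℝ≥0∞) * ν (n+1) (Dset A (n+1))
        = ∫⁻ _ in Dset A (n+1), (c:ℝ≥0∞) ∂(ν (n+1)) := by
      rw [setLIntegral_const]
    rw [h1, ← lintegral_add_left (hPV (n+1))]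
    calc ∫⁻ v in Dset A (n+1), (PV (n+1) v + c) ∂(ν (n+1))
        ≤ ∫⁻ v in Dset A (n+1), V (v (Fin.last (n+1))) ∂(ν (n+1)) := by
          refine setLIntegral_mono (hVlast n) ?_
          intro v hv
          exact hdrift _ (last_not_mem hv)
      _ ≤ ∫⁻ v in Eset A n, V (v (Fin.last (n+1))) ∂(ν (n+1)) :=
          lintegral_mono_set (Dset_subset_Eset n)
      _ = r n := rfl
  -- telescoping
  have htel : ∀ N : ℕ,
      r N + (c:ℝ≥0∞) * ∑ n ∈ Finset.range N, ν (n+1) (Dset A (n+1)) ≤ r 0 := by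
    intro N
    induction N with
    | zero => simp
    | succ N ih =>
      calc r (N+1) + (c:ℝ≥0∞) * ∑ n ∈ Finset.range (N+1), ν (n+1) (Dset A (n+1))
          = (r (N+1) + (c:ℝ≥0∞) * ν (N+1) (Dset A (N+1)))
            + (c:ℝ≥0∞) * ∑ n ∈ Finset.range N, ν (n+1) (Dset A (n+1)) := by
            rw [Finset.sum_range_succ, mul_add]; ring
        _ ≤ r N + (c:ℝ≥0∞) * ∑ n ∈ Finset.range N, ν (n+1) (Dset A (n+1)) :=
            add_le_add_left (hstep N) _
        _ ≤ r 0 := ih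
  have hsum : (c:ℝ≥0∞) * ∑' n : ℕ, ν (n+1) (Dset A (n+1)) ≤ (k : ℝ≥0∞) := by
    rw [ENNReal.tsum_eq_iSup_nat, ENNReal.mul_iSup]
    refine iSup_le fun N => ?_
    calc (c:ℝ≥0∞) * ∑ n ∈ Finset.range N, ν (n+1) (Dset A (n+1))
        ≤ r N + (c:ℝ≥0∞) * ∑ n ∈ Finset.range N, ν (n+1) (Dset A (n+1)) := le_add_self
      _ ≤ r 0 := htel N
      _ ≤ (k : ℝ≥0∞) := hr0
  -- identification of tail probabilities
  have hset : ∀ m : ℕ, {ω : ℕ → S | (m:ℕ∞) < hitTime A ω} = mp m ⁻¹' (Dset A m) := by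
    intro m
    ext ω
    rw [Set.mem_setOf_eq, hitTime_gt_iff]
    constructor
    · intro h i hi
      exact h (i:ℕ) hi (Nat.lt_succ_iff.mp i.isLt)
    · intro h j hj1 hjm
      exact h ⟨j, Nat.lt_succ_iff.mpr hjm⟩ hj1
  have hB : ∀ m : ℕ, MeasurableSet {ω : ℕ → S | (m:ℕ∞) < hitTime A ω} := by
    intro m
    rw [hset m]
    exact (hmp m) (measurableSet_Dset hA m)
  have hq : ∀ m : ℕ, L {ω : ℕ → S | (m:ℕ∞) < hitTime A ω} = ν m (Dset A m) := by
    intro m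
    rw [hset m, hν_def]
    exact (Measure.map_apply (hmp m) (measurableSet_Dset hA m)).symm
  -- expectation as a sum of tail probabilities
  have hexp : ∫⁻ ω, (hitTime A ω : ℝ≥0∞) ∂L
      = ∑' m : ℕ, L {ω : ℕ → S | (m:ℕ∞) < hitTime A ω} := by
    have hpt : ∀ ω : ℕ → S, (hitTime A ω : ℝ≥0∞)
        = ∑' m : ℕ, Set.indicator {ω : ℕ → S | (m:ℕ∞) < hitTime A ω}
            (fun _ => (1:ℝ≥0∞)) ω := by
      intro ω
      rw [enat_coe_eq_tsum (hitTime A ω)]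
      exact tsum_congr fun m => by rw [Set.indicator_apply]; simp [Set.mem_setOf_eq]
    rw [lintegral_congr hpt,
      lintegral_tsum fun m => (measurable_const.indicator (hB m)).aemeasurable]
    exact tsum_congr fun m => lintegral_indicator_one (hB m)
  have hB0 : {ω : ℕ → S | ((0:ℕ):ℕ∞) < hitTime A ω} = Set.univ := by
    ext ω
    simp only [Set.mem_setOf_eq, Set.mem_univ, iff_true]
    rw [hitTime_gt_iff]
    intro m h1 h0
    omega
  rw [hexp, tsum_eq_zero_add' ENNReal.summable, hB0, measure_univ]
  have htail : ∑' m : ℕ, L {ω : ℕ → S | ((m+1:ℕ):ℕ∞) < hitTime A ω} ≤ (k:ℝ≥0∞) / (c:ℝ≥0∞) := by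
    rw [ENNReal.le_div_iff_mul_le (Or.inl (by exact_mod_cast hc.ne'))
      (Or.inl ENNReal.coe_ne_top)]
    rw [mul_comm]
    calc (c:ℝ≥0∞) * ∑' m : ℕ, L {ω : ℕ → S | ((m+1:ℕ):ℕ∞) < hitTime A ω}
        = (c:ℝ≥0∞) * ∑' m : ℕ, ν (m+1) (Dset A (m+1)) := by
          congr 1
          exact tsum_congr fun m => hq (m+1)
      _ ≤ (k:ℝ≥0∞) := hsum
  exact add_le_add_right htail 1

end TweedieAux

/-- **Tweedie.** Under a Lyapunov–Foster drift condition `PV ≤ V − c` off `A` and `PV ≤ k`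
on `A`, the expected return times to `A` satisfy `sup_{x ∈ A} 𝔼^x (T_A) ≤ 1 + k / c`. -/
theorem expected_return_time_bound_of_drift
    {S : Type*} [MeasurableSpace S] [MeasurableSpace.CountablyGenerated S]
    (P : Kernel S S) [IsMarkovKernel P]
    (Pr : S → Measure (ℕ → S))
    (hPr : ∀ x : S, IsMarkovPath P (Measure.dirac x) (Pr x))
    (A : Set S) (hA : MeasurableSet A)
    (V : S → ℝ≥0∞) (hVmeas : Measurable V) (hVfin : ∀ x, V x ≠ ⊤)
    (c k : ℝ≥0) (hc : 0 < c)
    (hdrift : ∀ x ∉ A, (∫⁻ y, V y ∂(P x)) + (c : ℝ≥0∞) ≤ V x)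
    (hbound : ∀ x ∈ A, ∫⁻ y, V y ∂(P x) ≤ (k : ℝ≥0∞)) :
    ⨆ x ∈ A, ∫⁻ ω, (hitTime A ω : ℝ≥0∞) ∂(Pr x) ≤ 1 + (k : ℝ≥0∞) / (c : ℝ≥0∞) := by
  refine iSup₂_le fun x hx => ?_
  exact TweedieAux.key P hA hVmeas hc hdrift hbound hx (hPr x)
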